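/- If for a model selection procedure M̂ and confidence intervals C_j^M the conditional coverage P(β_j^M ∈ C_j^M | M̂ = M) ≥ 1 - α holds for every model M with P(M̂ = M) > 0 and every j ∈ M, then the false coverage rate is controlled: E[ |{j ∈ M̂ : β_j^{M̂} ∉ C_j^{M̂}}| / |M̂| ; |M̂| > 0 ] ≤ α. -/

import Mathlib

open MeasureTheory ProbabilityTheory
open scoped Classical

/-- if every selected model has conditional coverage at least `1 - α`, then the
false coverage rate (the expected proportion of selected parameters not covered by their
intervals, over the event that a nonempty model is selected) is at most `α`. -/
theorem conditional_coverage_implies_fcr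
    {Ω : Type*} [MeasurableSpace Ω] (P : Measure Ω) [IsProbabilityMeasure P]
    (p : ℕ) (Mhat : Ω → Finset (Fin p))
    (β : Finset (Fin p) → Fin p → ℝ)
    (C : Finset (Fin p) → Fin p → Ω → Set ℝ)
    (α : ℝ) (hα : 0 ≤ α)
    (hmeasM : ∀ M : Finset (Fin p), MeasurableSet {ω | Mhat ω = M})
    (hmeasC : ∀ (M : Finset (Fin p)) (j : Fin p),
      MeasurableSet {ω | β M j ∈ C M j ω})
    (hcover : ∀ M : Finset (Fin p), 0 < P {ω | Mhat ω = M} → ∀ j ∈ M,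
      ENNReal.ofReal (1 - α) ≤ P[|{ω | Mhat ω = M}] {ω | β M j ∈ C M j ω}) :
    ∫ ω in {ω | (Mhat ω).Nonempty},
        (((Mhat ω).filter fun j => β (Mhat ω) j ∉ C (Mhat ω) j ω).card : ℝ) /
          ((Mhat ω).card : ℝ) ∂P ≤ α := by
  classical
  set A : Finset (Fin p) → Set Ω := fun M => {ω | Mhat ω = M} with hA
  set f : Ω → ℝ := fun ω =>
    (((Mhat ω).filter fun j => β (Mhat ω) j ∉ C (Mhat ω) j ω).card : ℝ) /
      ((Mhat ω).card : ℝ) with hf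
  set 𝒩 : Finset (Finset (Fin p)) := Finset.univ.filter (fun M => M.Nonempty) with h𝒩
  set D : Finset (Fin p) → Fin p → Set Ω := fun M j => {ω | β M j ∈ C M j ω}ᶜ with hD
  have hmeasD : ∀ M j, MeasurableSet (D M j) := fun M j => (hmeasC M j).compl
  set g : Finset (Fin p) → Ω → ℝ := fun M ω =>
    ((M.card : ℝ))⁻¹ * ∑ j ∈ M, (D M j).indicator (fun _ => (1:ℝ)) ω with hg
  -- f agrees with g M on A M
  have hEq : ∀ M, Set.EqOn f (g M) (A M) := by
    intro M ω hω
    have hω' : Mhat ω = M := hω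
    simp only [hf, hg, hω']
    rw [div_eq_inv_mul]
    congr 1
    rw [Finset.card_filter]
    push_cast
    refine Finset.sum_congr rfl fun j hj => ?_
    by_cases h : β M j ∈ C M j ω
    · simp [hD, Set.indicator_apply, h]
    · simp [hD, Set.indicator_apply, h]
  have hgInt : ∀ M, Integrable (g M) P := by
    intro M
    refine Integrable.const_mul ?_ _
    refine integrable_finset_sum _ fun j _ => ?_
    exact (integrable_const (1:ℝ)).indicator (hmeasD M j)
  -- decompose the event
  have hS : {ω | (Mhat ω).Nonempty} = ⋃ M ∈ 𝒩, A M := by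
    ext ω
    simp only [Set.mem_iUnion, h𝒩, Finset.mem_filter, Finset.mem_univ, true_and, hA,
      Set.mem_setOf_eq]
    constructor
    · intro h; exact ⟨Mhat ω, h, rfl⟩
    · rintro ⟨M, hM, rfl⟩; exact hM
  have hdisj : Set.Pairwise (↑𝒩) (Function.onFun Disjoint A) := by
    intro M hM M' hM' hne
    simp only [Function.onFun, Set.disjoint_left]
    intro ω h1 h2
    exact hne (h1.symm.trans h2)
  have hIntOn : ∀ M ∈ 𝒩, IntegrableOn f (A M) P := fun M _ =>
    ((hgInt M).integrableOn).congr_fun (fun ω hω => ((hEq M) hω).symm) (hmeasM M)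
  rw [hS, integral_biUnion_finset 𝒩 (fun M _ => hmeasM M) hdisj hIntOn]
  -- bound each term
  have key : ∀ M ∈ 𝒩, ∫ ω in A M, f ω ∂P ≤ α * (P (A M)).toReal := by
    intro M hM
    have hMne : M.Nonempty := by simpa [h𝒩] using hM
    have hcard : (0:ℝ) < (M.card : ℝ) := by
      exact_mod_cast Finset.card_pos.mpr hMne
    rw [setIntegral_congr_fun (hmeasM M) (hEq M)]
    have hint : ∀ j ∈ M, IntegrableOn ((D M j).indicator (fun _ => (1:ℝ))) (A M) P :=
      fun j _ => ((integrable_const (1:ℝ)).indicator (hmeasD M j)).integrableOn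
    have hsum : ∫ ω in A M, g M ω ∂P
        = ((M.card : ℝ))⁻¹ * ∑ j ∈ M, (P (A M ∩ D M j)).toReal := by
      simp only [hg]
      rw [integral_const_mul, integral_finset_sum _ hint]
      congr 1
      refine Finset.sum_congr rfl fun j _ => ?_
      rw [setIntegral_indicator (hmeasD M j), setIntegral_const, smul_eq_mul, mul_one, measureReal_def]
    rw [hsum]
    -- per-coordinate bound
    have hPj : ∀ j ∈ M, (P (A M ∩ D M j)).toReal ≤ α * (P (A M)).toReal := by
      intro j hj
      rcases eq_or_lt_of_le ((zero_le : 0 ≤ P (A M))) with h0 | hpos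
      · have hz : P (A M ∩ D M j) = 0 :=
          le_antisymm (le_trans (measure_mono Set.inter_subset_left) h0.ge) zero_le
        simp [hz, ← h0]
      · have hfin : P (A M) ≠ ⊤ := measure_ne_top P _
        have hc := hcover M hpos j hj
        rw [cond_apply (hmeasM M)] at hc
        have h1 : ENNReal.ofReal (1 - α) * P (A M) ≤ P (A M ∩ {ω | β M j ∈ C M j ω}) := by
          calc ENNReal.ofReal (1 - α) * P (A M)
              ≤ ((P (A M))⁻¹ * P (A M ∩ {ω | β M j ∈ C M j ω})) * P (A M) :=
                mul_le_mul_left hc _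
            _ = P (A M ∩ {ω | β M j ∈ C M j ω}) * ((P (A M))⁻¹ * P (A M)) := by ring
            _ = P (A M ∩ {ω | β M j ∈ C M j ω}) := by
                rw [ENNReal.inv_mul_cancel hpos.ne' hfin, mul_one]
        have hsplit : P (A M ∩ {ω | β M j ∈ C M j ω}) + P (A M ∩ D M j) = P (A M) := by
          have := measure_inter_add_diff (μ := P) (A M) (hmeasC M j)
          rw [← this]
          congr 1
        have h2 : (1:ENNReal) ≤ ENNReal.ofReal α + ENNReal.ofReal (1 - α) := by
          calc (1:ENNReal) = ENNReal.ofReal (α + (1 - α)) := by norm_num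
            _ ≤ _ := ENNReal.ofReal_add_le
        have h3 : P (A M ∩ D M j) + ENNReal.ofReal (1 - α) * P (A M)
            ≤ ENNReal.ofReal α * P (A M) + ENNReal.ofReal (1 - α) * P (A M) := by
          calc P (A M ∩ D M j) + ENNReal.ofReal (1 - α) * P (A M)
              ≤ P (A M ∩ D M j) + P (A M ∩ {ω | β M j ∈ C M j ω}) :=
                add_le_add_right h1 _
            _ = P (A M) := by rw [add_comm]; exact hsplit
            _ = 1 * P (A M) := (one_mul _).symm
            _ ≤ (ENNReal.ofReal α + ENNReal.ofReal (1 - α)) * P (A M) :=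
                mul_le_mul_left h2 _
            _ = ENNReal.ofReal α * P (A M) + ENNReal.ofReal (1 - α) * P (A M) := by
                rw [add_mul]
        have h4 : P (A M ∩ D M j) ≤ ENNReal.ofReal α * P (A M) := by
          have hfin' : ENNReal.ofReal (1 - α) * P (A M) ≠ ⊤ :=
            ENNReal.mul_ne_top ENNReal.ofReal_ne_top hfin
          exact (ENNReal.add_le_add_iff_right hfin').mp h3
        have h5 := ENNReal.toReal_mono
          (ENNReal.mul_ne_top ENNReal.ofReal_ne_top hfin) h4
        rwa [ENNReal.toReal_mul, ENNReal.toReal_ofReal hα] at h5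
    have hsum_le : ∑ j ∈ M, (P (A M ∩ D M j)).toReal
        ≤ (M.card : ℝ) * (α * (P (A M)).toReal) := by
      calc ∑ j ∈ M, (P (A M ∩ D M j)).toReal
          ≤ ∑ j ∈ M, α * (P (A M)).toReal := Finset.sum_le_sum hPj
        _ = (M.card : ℝ) * (α * (P (A M)).toReal) := by
            rw [Finset.sum_const, nsmul_eq_mul]
    calc ((M.card : ℝ))⁻¹ * ∑ j ∈ M, (P (A M ∩ D M j)).toReal
        ≤ ((M.card : ℝ))⁻¹ * ((M.card : ℝ) * (α * (P (A M)).toReal)) :=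
          mul_le_mul_of_nonneg_left hsum_le (inv_nonneg.mpr hcard.le)
      _ = α * (P (A M)).toReal := by
          rw [← mul_assoc, inv_mul_cancel₀ hcard.ne', one_mul]
  show ∑ M ∈ 𝒩, ∫ ω in A M, f ω ∂P ≤ α
  calc ∑ M ∈ 𝒩, ∫ ω in A M, f ω ∂P
      ≤ ∑ M ∈ 𝒩, α * (P (A M)).toReal := Finset.sum_le_sum key
    _ = α * ∑ M ∈ 𝒩, (P (A M)).toReal := by rw [Finset.mul_sum]
    _ ≤ α * 1 := by
        refine mul_le_mul_of_nonneg_left ?_ hα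
        have h1 : ∑ M ∈ 𝒩, P (A M) ≤ 1 := by
          rw [← measure_biUnion_finset hdisj (fun M _ => hmeasM M)]
          exact prob_le_one
        have h2 : (∑ M ∈ 𝒩, P (A M)).toReal = ∑ M ∈ 𝒩, (P (A M)).toReal :=
          ENNReal.toReal_sum (fun M _ => measure_ne_top P _)
        rw [← h2]
        calc (∑ M ∈ 𝒩, P (A M)).toReal ≤ (1:ENNReal).toReal :=
              ENNReal.toReal_mono ENNReal.one_ne_top h1
          _ = 1 := ENNReal.toReal_one
    _ = α := mul_one α
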